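/- Let f : ℝ → ℂ^p be Z-almost automorphic and define F(t) = ∫₀ᵗ f(s) ds. Then F is bounded on ℝ if and only if F is almost automorphic (in Bochner's sense). -/

import Mathlib

open MeasureTheory Filter Topology

/-- Bounded, piecewise continuous: continuous on ℝ ∖ ℤ with finite one-sided
limits at every integer. -/
def BddPC (p : ℕ) (f : ℝ → Fin p → ℂ) : Prop :=
  (∃ C : ℝ, ∀ t : ℝ, ‖f t‖ ≤ C) ∧
  ContinuousOn f {t : ℝ | ∀ n : ℤ, t ≠ (n : ℝ)} ∧
  ∀ n : ℤ, (∃ L : Fin p → ℂ, Tendsto f (𝓝[<] (n : ℝ)) (𝓝 L)) ∧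
           (∃ R : Fin p → ℂ, Tendsto f (𝓝[>] (n : ℝ)) (𝓝 R))

/-- `ℤ`-almost automorphic functions. -/
def ZAlmostAutomorphic (p : ℕ) (f : ℝ → Fin p → ℂ) : Prop :=
  BddPC p f ∧
  ∀ s : ℕ → ℤ, ∃ (φ : ℕ → ℕ) (g : ℝ → Fin p → ℂ), StrictMono φ ∧
    (∀ t : ℝ, Tendsto (fun n => f (t + (s (φ n) : ℝ))) atTop (𝓝 (g t))) ∧
    (∀ t : ℝ, Tendsto (fun n => g (t - (s (φ n) : ℝ))) atTop (𝓝 (f t)))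

/-- Almost automorphic functions in the sense of Bochner. -/
def AlmostAutomorphic (p : ℕ) (f : ℝ → Fin p → ℂ) : Prop :=
  (∃ C : ℝ, ∀ t : ℝ, ‖f t‖ ≤ C) ∧ Continuous f ∧
  ∀ s : ℕ → ℝ, ∃ (φ : ℕ → ℕ) (g : ℝ → Fin p → ℂ), StrictMono φ ∧
    (∀ t : ℝ, Tendsto (fun n => f (t + s (φ n))) atTop (𝓝 (g t))) ∧
    (∀ t : ℝ, Tendsto (fun n => g (t - s (φ n))) atTop (𝓝 (f t)))

section Helpers

variable {p : ℕ}

/-- A bounded a.e.-strongly-measurable function is interval integrable. -/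
lemma intervalIntegrable_of_bdd {h : ℝ → Fin p → ℂ} {C : ℝ}
    (hm : AEStronglyMeasurable h volume) (hb : ∀ t, ‖h t‖ ≤ C) (a b : ℝ) :
    IntervalIntegrable h volume a b := by
  rw [intervalIntegrable_iff]
  exact ((integrableOn_const measure_Ioc_lt_top.ne) :
    IntegrableOn (fun _ => C) (Set.uIoc a b) volume).mono'
      hm.restrict (Filter.Eventually.of_forall hb)

/-- A `BddPC` function is a.e. strongly measurable. -/
lemma bddPC_aesm {f : ℝ → Fin p → ℂ} (h : BddPC p f) :
    AEStronglyMeasurable f volume := by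
  set s : Set ℝ := {t : ℝ | ∀ n : ℤ, t ≠ (n : ℝ)} with hs
  have hsc : sᶜ = ⋃ n : ℤ, {(n : ℝ)} := by
    ext t
    simp [hs, not_forall, eq_comm]
  have hcnt : (sᶜ).Countable := by
    rw [hsc]
    exact Set.countable_iUnion fun n => Set.countable_singleton _
  have hmeas : MeasurableSet s := by
    have := hcnt.measurableSet
    simpa using this.compl
  have hnull : volume sᶜ = 0 := by
    rw [hsc]
    exact measure_iUnion_null fun n => measure_singleton _
  have hae : ∀ᵐ x ∂(volume : Measure ℝ), x ∈ s := by
    rw [MeasureTheory.ae_iff]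
    exact hnull
  have := h.2.1.aestronglyMeasurable (μ := volume) hmeas
  rwa [Measure.restrict_eq_self_of_ae_mem hae] at this

lemma aesm_add_right {h : ℝ → Fin p → ℂ} (hm : AEStronglyMeasurable h volume) (c : ℝ) :
    AEStronglyMeasurable (fun t => h (t + c)) volume :=
  hm.comp_measurePreserving (measurePreserving_add_right volume c)

lemma aesm_sub_right {h : ℝ → Fin p → ℂ} (hm : AEStronglyMeasurable h volume) (c : ℝ) :
    AEStronglyMeasurable (fun t => h (t - c)) volume :=
  hm.comp_measurePreserving (measurePreserving_sub_right volume c)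

/-- Key convergence lemma: integrals of a uniformly bounded, pointwise convergent
sequence over intervals with converging endpoints converge. -/
lemma key_tendsto {h : ℕ → ℝ → Fin p → ℂ} {hl : ℝ → Fin p → ℂ} {C : ℝ}
    (hm : ∀ n, AEStronglyMeasurable (h n) volume)
    (hb : ∀ n t, ‖h n t‖ ≤ C)
    (hml : AEStronglyMeasurable hl volume)
    (hbl : ∀ t, ‖hl t‖ ≤ C)
    (hlim : ∀ t, Tendsto (fun n => h n t) atTop (𝓝 (hl t)))
    {e : ℕ → ℝ} {ρ : ℝ} (he : Tendsto e atTop (𝓝 ρ)) (t : ℝ) :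
    Tendsto (fun n => ∫ u in (e n)..(t + e n), h n u) atTop
      (𝓝 (∫ u in ρ..(t + ρ), hl u)) := by
  have hint : ∀ n a b, IntervalIntegrable (h n) volume a b :=
    fun n => intervalIntegrable_of_bdd (hm n) (hb n)
  have hdecomp : ∀ n, (∫ u in (e n)..(t + e n), h n u)
      = ((∫ u in (e n)..ρ, h n u) + ∫ u in ρ..(t + ρ), h n u)
        + ∫ u in (t + ρ)..(t + e n), h n u := by
    intro n
    rw [intervalIntegral.integral_add_adjacent_intervals (hint n _ _) (hint n _ _),
        intervalIntegral.integral_add_adjacent_intervals (hint n _ _) (hint n _ _)]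
  have hA : Tendsto (fun n => ∫ u in (e n)..ρ, h n u) atTop (𝓝 0) := by
    refine squeeze_zero_norm
      (fun n => intervalIntegral.norm_integral_le_of_norm_le_const fun x _ => hb n x) ?_
    have : Tendsto (fun n => C * |ρ - e n|) atTop (𝓝 (C * |ρ - ρ|)) :=
      tendsto_const_nhds.mul ((tendsto_const_nhds.sub he).abs)
    simpa using this
  have hD : Tendsto (fun n => ∫ u in (t + ρ)..(t + e n), h n u) atTop (𝓝 0) := by
    refine squeeze_zero_norm
      (fun n => intervalIntegral.norm_integral_le_of_norm_le_const fun x _ => hb n x) ?_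
    have : Tendsto (fun n => C * |t + e n - (t + ρ)|) atTop (𝓝 (C * |t + ρ - (t + ρ)|)) :=
      tendsto_const_nhds.mul (((tendsto_const_nhds.add he).sub tendsto_const_nhds).abs)
    simpa using this
  have hB : Tendsto (fun n => ∫ u in ρ..(t + ρ), h n u) atTop
      (𝓝 (∫ u in ρ..(t + ρ), hl u)) := by
    refine intervalIntegral.tendsto_integral_filter_of_dominated_convergence (fun _ => C)
      (Filter.Eventually.of_forall fun n => (hm n).restrict)
      (Filter.Eventually.of_forall fun n => Filter.Eventually.of_forall fun x _ => hb n x)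
      intervalIntegrable_const
      (Filter.Eventually.of_forall fun x _ => hlim x)
  have := (hA.add hB).add hD
  rw [zero_add, add_zero] at this
  exact this.congr fun n => (hdecomp n).symm

end Helpers

/-- For `f` `ℤ`-almost automorphic, the primitive `F(t) = ∫₀ᵗ f(s) ds` is bounded
if and only if it is almost automorphic in Bochner's sense. -/
theorem primitive_bounded_iff_almostAutomorphic {p : ℕ}
    (f : ℝ → Fin p → ℂ) (hf : ZAlmostAutomorphic p f)
    (F : ℝ → Fin p → ℂ) (hF : ∀ t : ℝ, F t = ∫ s in (0:ℝ)..t, f s) :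
    (∃ C : ℝ, ∀ t : ℝ, ‖F t‖ ≤ C) ↔ AlmostAutomorphic p F := by
  constructor
  · rintro ⟨M, hM⟩
    obtain ⟨C, hC⟩ := hf.1.1
    have hfm : AEStronglyMeasurable f volume := bddPC_aesm hf.1
    have hfint : ∀ a b, IntervalIntegrable f volume a b := intervalIntegrable_of_bdd hfm hC
    have hFcont : Continuous F :=
      (intervalIntegral.continuous_primitive hfint 0).congr fun t => (hF t).symm
    refine ⟨⟨M, hM⟩, hFcont, ?_⟩
    intro s
    set m : ℕ → ℤ := fun n => ⌊s n⌋ with hmdef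
    set r : ℕ → ℝ := fun n => Int.fract (s n) with hrdef
    have hsr : ∀ n, (m n : ℝ) + r n = s n := fun n => Int.floor_add_fract _
    -- extract a convergent subsequence of the fractional parts
    obtain ⟨ρ, -, φ₁, hφ₁, hρ⟩ :=
      (isCompact_Icc (a := (0:ℝ)) (b := 1)).tendsto_subseq (x := r)
        (fun n => ⟨Int.fract_nonneg _, (Int.fract_lt_one _).le⟩)
    -- apply ℤ-almost automorphy to the integer parts
    obtain ⟨φ₂, g, hφ₂, hg₁, hg₂⟩ := hf.2 (fun n => m (φ₁ n))
    have hgb : ∀ t, ‖g t‖ ≤ C := fun t => le_of_tendsto' (hg₁ t).norm (fun n => hC _)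
    have hgm : AEStronglyMeasurable g volume :=
      aestronglyMeasurable_of_tendsto_ae atTop
        (fun n => aesm_add_right hfm ((m (φ₁ (φ₂ n)) : ℝ)))
        (Filter.Eventually.of_forall fun t => hg₁ t)
    have hgint : ∀ a b, IntervalIntegrable g volume a b := intervalIntegrable_of_bdd hgm hgb
    set σ₁ : ℕ → ℕ := fun n => φ₁ (φ₂ n) with hσ₁def
    -- extract so that F (s (σ n)) converges
    obtain ⟨a, -, φ₃, hφ₃, haconv⟩ :=
      (isCompact_closedBall (0 : Fin p → ℂ) M).tendsto_subseq
        (x := fun n => F (s (σ₁ n)))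
        (fun n => by simpa [Metric.mem_closedBall, dist_zero_right] using hM (s (σ₁ n)))
    set σ₂ : ℕ → ℕ := fun n => σ₁ (φ₃ n) with hσ₂def
    have hρ₂ : Tendsto (fun n => r (σ₂ n)) atTop (𝓝 ρ) :=
      hρ.comp ((hφ₂.comp hφ₃).tendsto_atTop)
    have hg₁₂ : ∀ t, Tendsto (fun n => f (t + (m (σ₂ n) : ℝ))) atTop (𝓝 (g t)) :=
      fun t => (hg₁ t).comp hφ₃.tendsto_atTop
    have haconv₂ : Tendsto (fun n => F (s (σ₂ n))) atTop (𝓝 a) := haconv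
    set G : ℝ → Fin p → ℂ := fun t => a + ∫ u in ρ..(t + ρ), g u with hGdef
    -- first convergence : F (t + s n) → G t
    have hFG : ∀ t, Tendsto (fun n => F (t + s (σ₂ n))) atTop (𝓝 (G t)) := by
      intro t
      have hkey := key_tendsto (h := fun n => fun u => f (u + (m (σ₂ n) : ℝ)))
        (hl := g) (C := C) (fun n => aesm_add_right hfm _) (fun n u => hC _) hgm hgb
        (fun u => hg₁₂ u) hρ₂ t
      have heq : ∀ n, F (t + s (σ₂ n)) = F (s (σ₂ n)) +
          ∫ u in (r (σ₂ n))..(t + r (σ₂ n)), f (u + (m (σ₂ n) : ℝ)) := by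
        intro n
        rw [intervalIntegral.integral_comp_add_right (fun u => f u) ((m (σ₂ n) : ℝ)),
            show r (σ₂ n) + (m (σ₂ n) : ℝ) = s (σ₂ n) by rw [← hsr (σ₂ n)]; ring,
            show t + r (σ₂ n) + (m (σ₂ n) : ℝ) = t + s (σ₂ n) by rw [← hsr (σ₂ n)]; ring,
            hF, hF]
        exact (intervalIntegral.integral_add_adjacent_intervals (hfint _ _) (hfint _ _)).symm
      exact Filter.Tendsto.congr (fun n => (heq n).symm) (haconv₂.add hkey)
    have hGb : ∀ t, ‖G t‖ ≤ M := fun t => le_of_tendsto' (hFG t).norm (fun n => hM _)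
    -- extract so that G (-(s n)) converges
    obtain ⟨b, -, φ₄, hφ₄, hbconv⟩ :=
      (isCompact_closedBall (0 : Fin p → ℂ) M).tendsto_subseq
        (x := fun n => G (-(s (σ₂ n))))
        (fun n => by simpa [Metric.mem_closedBall, dist_zero_right] using hGb (-(s (σ₂ n))))
    set τ : ℕ → ℕ := fun n => σ₂ (φ₄ n) with hτdef
    have hbconv' : Tendsto (fun n => G (-(s (τ n)))) atTop (𝓝 b) := hbconv
    have hρτ : Tendsto (fun n => r (τ n)) atTop (𝓝 ρ) := hρ₂.comp hφ₄.tendsto_atTop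
    have hg₂τ : ∀ t, Tendsto (fun n => g (t - (m (τ n) : ℝ))) atTop (𝓝 (f t)) :=
      fun t => (hg₂ t).comp ((hφ₃.comp hφ₄).tendsto_atTop)
    -- second convergence : G (t - s n) → b + F t
    have hGF : ∀ t, Tendsto (fun n => G (t - s (τ n))) atTop (𝓝 (b + F t)) := by
      intro t
      have heτ : Tendsto (fun n => ρ - r (τ n)) atTop (𝓝 0) := by
        have := tendsto_const_nhds (x := ρ) (f := atTop (α := ℕ)) |>.sub hρτ
        simpa using this
      have hkey := key_tendsto (h := fun n => fun v => g (v - (m (τ n) : ℝ)))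
        (hl := f) (C := C) (fun n => aesm_sub_right hgm _) (fun n v => hgb _) hfm hC
        (fun v => hg₂τ v) heτ t
      have hlimval : (∫ v in (0:ℝ)..(t + 0), f v) = F t := by
        rw [add_zero, hF]
      rw [hlimval] at hkey
      have heq : ∀ n, G (t - s (τ n)) = G (-(s (τ n))) +
          ∫ v in (ρ - r (τ n))..(t + (ρ - r (τ n))), g (v - (m (τ n) : ℝ)) := by
        intro n
        rw [intervalIntegral.integral_comp_sub_right (fun v => g v) ((m (τ n) : ℝ)),
            show ρ - r (τ n) - (m (τ n) : ℝ) = -(s (τ n)) + ρ by rw [← hsr (τ n)]; ring,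
            show t + (ρ - r (τ n)) - (m (τ n) : ℝ) = t - s (τ n) + ρ by rw [← hsr (τ n)]; ring]
        show a + (∫ u in ρ..(t - s (τ n) + ρ), g u)
          = (a + ∫ u in ρ..(-(s (τ n)) + ρ), g u) + ∫ u in (-(s (τ n)) + ρ)..(t - s (τ n) + ρ), g u
        rw [add_assoc, intervalIntegral.integral_add_adjacent_intervals (hgint _ _) (hgint _ _)]
      exact Filter.Tendsto.congr (fun n => (heq n).symm) (hbconv'.add hkey)
    -- the constant b must vanish
    have hFGτ : ∀ t, Tendsto (fun n => F (t + s (τ n))) atTop (𝓝 (G t)) :=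
      fun t => (hFG t).comp hφ₄.tendsto_atTop
    have hMb : ∀ k : ℕ, ∀ t, ‖F t + k • b‖ ≤ M := by
      intro k
      induction k with
      | zero => simpa using hM
      | succ k ih =>
        have hGk : ∀ u, ‖G u + k • b‖ ≤ M := by
          intro u
          have hconv : Tendsto (fun n => F (u + s (τ n)) + k • b) atTop (𝓝 (G u + k • b)) :=
            (hFGτ u).add tendsto_const_nhds
          exact le_of_tendsto' hconv.norm fun n => ih _
        intro t
        have hconv : Tendsto (fun n => G (t - s (τ n)) + k • b) atTop
            (𝓝 ((b + F t) + k • b)) := (hGF t).add tendsto_const_nhds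
        have h2 := le_of_tendsto' hconv.norm fun n => hGk _
        have heqv : F t + (k + 1) • b = (b + F t) + k • b := by
          rw [succ_nsmul]; abel
        rw [heqv]
        exact h2
    have hb0 : b = 0 := by
      by_contra hb
      have hbpos : 0 < ‖b‖ := norm_pos_iff.2 hb
      obtain ⟨k, hk⟩ := exists_nat_gt ((M + M) / ‖b‖)
      have h2 : ‖(F 0 + k • b) - F 0‖ ≤ M + M :=
        (norm_sub_le _ _).trans (add_le_add (hMb k 0) (hM 0))
      have h3 : (k : ℝ) * ‖b‖ ≤ M + M := by
        rw [add_sub_cancel_left, show (k : ℕ) • b = (k : ℝ) • b from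
          (Nat.cast_smul_eq_nsmul ℝ k b).symm, norm_smul] at h2
        simpa using h2
      rw [div_lt_iff₀ hbpos] at hk
      linarith
    -- conclude
    refine ⟨τ, G, ?_, hFGτ, ?_⟩
    · intro x y hxy
      exact hφ₁ (hφ₂ (hφ₃ (hφ₄ hxy)))
    · intro t
      have := hGF t
      rw [hb0, zero_add] at this
      exact this
  · rintro ⟨hbd, -, -⟩
    exact hbd
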